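/- Let p be an odd prime, q = p^r, and let 0 ≤ m ≤ q−2 with m ≠ (q−1)/2. Then Π_{i=0}^{r−1} [Γ_p(⟨(1/2 − m/(q−1))p^i⟩) · Γ_p(⟨(1/2 + m/(q−1))p^i⟩)] / [Γ_p(⟨p^i/2⟩)^2] = ω̄^m(−1). -/

import Mathlib

open Finset in
lemma aux_w_eq_neg_one (p : ℕ) [hpf : Fact p.Prime] (q1 : ℕ) (hq1 : ¬ p ∣ q1)
    (heven : Even q1) (hq1pos : 0 < q1) (w : ℚ_[p]) (hw1 : w ^ q1 = 1)
    (hw2 : ‖w + 1‖ < 1) : w = -1 := by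
  have hnw : ‖w‖ = 1 := by
    rcases lt_trichotomy ‖w‖ 1 with h | h | h
    · have : ‖w ^ q1‖ < 1 := by
        rw [norm_pow]
        exact pow_lt_one₀ (norm_nonneg w) h hq1pos.ne'
      rw [hw1, norm_one] at this; linarith
    · exact h
    · have : 1 < ‖w ^ q1‖ := by
        rw [norm_pow]
        exact one_lt_pow₀ h hq1pos.ne'
      rw [hw1, norm_one] at this; linarith
  have hterm : ∀ i : ℕ, ‖w ^ i - (-1 : ℚ_[p]) ^ i‖ ≤ ‖w + 1‖ := by
    intro i
    have h0 := geom_sum₂_mul w (-1 : ℚ_[p]) i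
    rw [sub_neg_eq_add] at h0
    rw [← h0, norm_mul]
    have hs : ‖∑ j ∈ range i, w ^ j * (-1 : ℚ_[p]) ^ (i - 1 - j)‖ ≤ 1 := by
      apply IsUltrametricDist.norm_sum_le_of_forall_le_of_nonneg zero_le_one
      intro j _
      rw [norm_mul, norm_pow, norm_pow, hnw, norm_neg, norm_one, one_pow, one_pow, one_mul]
    calc ‖∑ j ∈ range i, w ^ j * (-1 : ℚ_[p]) ^ (i - 1 - j)‖ * ‖w + 1‖
        ≤ 1 * ‖w + 1‖ := by gcongr
      _ = ‖w + 1‖ := one_mul _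
  set S : ℚ_[p] := ∑ i ∈ range q1, w ^ i * (-1 : ℚ_[p]) ^ (q1 - 1 - i) with hS
  have hmain : S * (w + 1) = 0 := by
    have h0 := geom_sum₂_mul w (-1 : ℚ_[p]) q1
    rw [sub_neg_eq_add] at h0
    rw [← hS] at h0
    rw [h0, hw1, heven.neg_one_pow, sub_self]
  have hSnorm : ‖S‖ = 1 := by
    have hdecomp : S = (q1 : ℚ_[p]) * (-1) ^ (q1 - 1) +
        ∑ i ∈ range q1, (w ^ i - (-1 : ℚ_[p]) ^ i) * (-1 : ℚ_[p]) ^ (q1 - 1 - i) := by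
      rw [hS]
      have h1 : ∀ i ∈ range q1, w ^ i * (-1 : ℚ_[p]) ^ (q1 - 1 - i) =
          (-1 : ℚ_[p]) ^ (q1 - 1) + (w ^ i - (-1 : ℚ_[p]) ^ i) * (-1 : ℚ_[p]) ^ (q1 - 1 - i) := by
        intro i hi
        have hi' : i < q1 := mem_range.mp hi
        have h2 : (-1 : ℚ_[p]) ^ (q1 - 1) = (-1 : ℚ_[p]) ^ i * (-1 : ℚ_[p]) ^ (q1 - 1 - i) := by
          rw [← pow_add]
          congr 1
          omega
        rw [h2]; ring
      rw [Finset.sum_congr rfl h1, Finset.sum_add_distrib, Finset.sum_const, card_range,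
        nsmul_eq_mul]
    have hT : ‖∑ i ∈ range q1, (w ^ i - (-1 : ℚ_[p]) ^ i) * (-1 : ℚ_[p]) ^ (q1 - 1 - i)‖ < 1 := by
      apply lt_of_le_of_lt _ hw2
      apply IsUltrametricDist.norm_sum_le_of_forall_le_of_nonneg (norm_nonneg _)
      intro i _
      rw [norm_mul, norm_pow, norm_neg, norm_one, one_pow, mul_one]
      exact hterm i
    have hq1norm : ‖(q1 : ℚ_[p]) * (-1) ^ (q1 - 1)‖ = 1 := by
      rw [norm_mul, norm_pow, norm_neg, norm_one, one_pow, mul_one]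
      have h1 : ‖((q1 : ℤ) : ℚ_[p])‖ < 1 ↔ (p : ℤ) ∣ (q1 : ℤ) :=
        Padic.norm_intCast_lt_one_iff (k := q1)
      have h2 : ‖((q1 : ℤ) : ℚ_[p])‖ ≤ 1 := Padic.norm_int_le_one q1
      push_cast at h1 h2
      rcases lt_or_eq_of_le h2 with h | h
      · exact absurd (Int.natCast_dvd_natCast.mp (h1.mp h)) hq1
      · exact h
    rw [hdecomp,
      Padic.add_eq_max_of_ne (by rw [hq1norm]; exact fun h => absurd (h ▸ hT) (lt_irrefl _)),
      hq1norm]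
    exact max_eq_left (le_of_lt (hq1norm ▸ hT))
  rcases mul_eq_zero.mp hmain with h | h
  · exfalso; rw [h, norm_zero] at hSnorm; linarith
  · exact eq_neg_of_add_eq_zero_left h

variable {p : ℕ} [hpf : Fact p.Prime] {G : ℤ_[p] → ℚ_[p]}

lemma aux_G_succ (hG : ∀ n : ℕ, G n = (-1) ^ n *
      ∏ j ∈ (Finset.Ico 1 n).filter (fun j => ¬ p ∣ j), (j : ℚ_[p])) (n : ℕ) :
    G ((n + 1 : ℕ)) = if p ∣ n then -G n else -(n : ℚ_[p]) * G n := by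
  rw [hG, hG]
  rcases Nat.eq_zero_or_pos n with rfl | hn
  · simp
  · rw [Finset.prod_filter, Finset.prod_filter, Finset.prod_Ico_succ_top hn]
    by_cases hdvd : p ∣ n
    · simp only [hdvd, not_true, if_false, if_true, mul_one, pow_succ]
      ring
    · simp only [hdvd, not_false_iff, if_true, if_false, pow_succ]
      ring

lemma aux_G_nonunit (hcont : Continuous G)
    (hG : ∀ n : ℕ, G n = (-1) ^ n *
      ∏ j ∈ (Finset.Ico 1 n).filter (fun j => ¬ p ∣ j), (j : ℚ_[p]))
    (x : ℤ_[p]) (hx : ‖x‖ < 1) : G (x + 1) = -G x := by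
  obtain ⟨y, rfl⟩ := (PadicInt.norm_lt_one_iff_dvd x).mp hx
  set s : Set ℤ_[p] := Set.range (fun k : ℕ => ((p * k : ℕ) : ℤ_[p])) with hs
  have heq : Set.EqOn (fun z => G (z + 1)) (fun z => -G z) s := by
    rintro _ ⟨k, rfl⟩
    simp only
    have := aux_G_succ hG (p * k)
    rw [if_pos ⟨k, rfl⟩] at this
    push_cast at this ⊢
    exact this
  have hcl : Set.EqOn (fun z => G (z + 1)) (fun z => -G z) (closure s) :=
    heq.closure (hcont.comp (continuous_add_right 1)) hcont.neg
  apply hcl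
  have h1 : (p : ℤ_[p]) * y ∈ (fun z : ℤ_[p] => (p : ℤ_[p]) * z) '' closure (Set.range (Nat.cast : ℕ → ℤ_[p])) := by
    refine ⟨y, ?_, rfl⟩
    rw [PadicInt.denseRange_natCast.closure_range]
    trivial
  refine (image_closure_subset_closure_image (by continuity)).trans (closure_mono ?_) h1
  rintro _ ⟨_, ⟨k, rfl⟩, rfl⟩
  exact ⟨k, by push_cast; ring⟩

lemma aux_G_unit (hcont : Continuous G)
    (hG : ∀ n : ℕ, G n = (-1) ^ n *
      ∏ j ∈ (Finset.Ico 1 n).filter (fun j => ¬ p ∣ j), (j : ℚ_[p]))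
    (x : ℤ_[p]) (hx : ‖x‖ = 1) : G (x + 1) = -(x : ℚ_[p]) * G x := by
  set U : Set ℤ_[p] := norm ⁻¹' Set.Ioi (1/2 : ℝ) with hU
  have hUopen : IsOpen U := continuous_norm.isOpen_preimage _ isOpen_Ioi
  have hxU : x ∈ U := by
    simp only [hU, Set.mem_preimage, Set.mem_Ioi, hx]
    norm_num
  have hnorm_of_U : ∀ z : ℤ_[p], z ∈ U → ‖z‖ = 1 := by
    intro z hz
    simp only [hU, Set.mem_preimage, Set.mem_Ioi] at hz
    by_contra hne
    have hlt : ‖z‖ < 1 := lt_of_le_of_ne z.norm_le_one hne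
    have := (PadicInt.norm_lt_one_iff_dvd z).mp hlt
    obtain ⟨c, rfl⟩ := this
    have : ‖(p : ℤ_[p]) * c‖ ≤ ‖(p : ℤ_[p])‖ := by
      rw [norm_mul]
      calc ‖(p : ℤ_[p])‖ * ‖c‖ ≤ ‖(p : ℤ_[p])‖ * 1 := by gcongr; exact c.norm_le_one
        _ = ‖(p : ℤ_[p])‖ := mul_one _
    rw [PadicInt.norm_p] at this
    have hp2 : (2 : ℝ) ≤ p := by exact_mod_cast hpf.out.two_le
    have h3 : ((p : ℝ))⁻¹ ≤ (2 : ℝ)⁻¹ := by gcongr <;> norm_num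
    rw [show (1:ℝ)/2 = (2:ℝ)⁻¹ by norm_num] at hz
    linarith
  have heq : Set.EqOn (fun z : ℤ_[p] => G (z + 1)) (fun z : ℤ_[p] => -(z : ℚ_[p]) * G z)
      (U ∩ Set.range (Nat.cast : ℕ → ℤ_[p])) := by
    rintro _ ⟨hzU, k, rfl⟩
    simp only
    have hk : ¬ p ∣ k := by
      intro hdvd
      have : ‖((k : ℤ) : ℤ_[p])‖ < 1 := by
        rw [PadicInt.norm_int_lt_one_iff_dvd]
        exact_mod_cast hdvd
      rw [show ((k : ℤ) : ℤ_[p]) = (k : ℤ_[p]) by push_cast; ring] at this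
      rw [hnorm_of_U _ hzU] at this
      linarith
    have := aux_G_succ hG k
    rw [if_neg hk] at this
    push_cast at this ⊢
    exact this
  have hcl := heq.closure (f := fun z : ℤ_[p] => G (z + 1))
    (g := fun z : ℤ_[p] => -(z : ℚ_[p]) * G z)
    (hcont.comp (continuous_add_right 1))
    ((continuous_subtype_val.neg).mul hcont)
  apply hcl
  exact PadicInt.denseRange_natCast.open_subset_closure_inter hUopen hxU

lemma aux_h_succ (hcont : Continuous G)
    (hG : ∀ n : ℕ, G n = (-1) ^ n *
      ∏ j ∈ (Finset.Ico 1 n).filter (fun j => ¬ p ∣ j), (j : ℚ_[p]))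
    (x : ℤ_[p]) : G (x + 1) * G (1 - (x + 1)) =
      if ‖x‖ < 1 then G x * G (1 - x) else -(G x * G (1 - x)) := by
  have hxx : (1 : ℤ_[p]) - (x + 1) = -x := by ring
  have hx1 : (1 : ℤ_[p]) - x = -x + 1 := by ring
  by_cases hx : ‖x‖ < 1
  · rw [if_pos hx, hxx, hx1, aux_G_nonunit hcont hG x hx,
      aux_G_nonunit hcont hG (-x) (by rwa [norm_neg])]
    ring
  · have hx' : ‖x‖ = 1 := le_antisymm x.norm_le_one (not_lt.mp hx)
    rw [if_neg hx, hxx, hx1, aux_G_unit hcont hG x hx',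
      aux_G_unit hcont hG (-x) (by rwa [norm_neg])]
    push_cast
    ring

lemma aux_h_nat (hodd : Odd p) (hcont : Continuous G)
    (hG : ∀ n : ℕ, G n = (-1) ^ n *
      ∏ j ∈ (Finset.Ico 1 n).filter (fun j => ¬ p ∣ j), (j : ℚ_[p]))
    (j : ℕ) : G j * G (1 - (j : ℤ_[p])) =
      if j % p = 0 then -1 else (-1) ^ (j % p) := by
  have hp1 : 1 < p := hpf.out.one_lt
  induction j with
  | zero =>
    have h0 : G ((0 : ℕ) : ℤ_[p]) = 1 := by rw [hG]; simp
    have h1 : G ((1 : ℕ) : ℤ_[p]) = -1 := by rw [hG]; simp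
    rw [show (1 : ℤ_[p]) - ((0 : ℕ) : ℤ_[p]) = ((1 : ℕ) : ℤ_[p]) by push_cast; ring, h0, h1]
    simp
  | succ j ih =>
    have hstep := aux_h_succ hcont hG (j : ℤ_[p])
    have hcast : ((j + 1 : ℕ) : ℤ_[p]) = (j : ℤ_[p]) + 1 := by push_cast; ring
    rw [hcast, hstep]
    have hdvd : ‖(j : ℤ_[p])‖ < 1 ↔ j % p = 0 := by
      rw [show ((j : ℕ) : ℤ_[p]) = ((j : ℤ) : ℤ_[p]) by push_cast; ring,
        PadicInt.norm_int_lt_one_iff_dvd, Int.natCast_dvd_natCast]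
      exact Nat.dvd_iff_mod_eq_zero
    have hmod : (j + 1) % p = (j % p + 1) % p := by
      conv_lhs => rw [Nat.add_mod]
      rw [Nat.mod_eq_of_lt hp1]
    by_cases h0 : j % p = 0
    · rw [if_pos (hdvd.mpr h0), ih, if_pos h0, hmod, h0]
      have h1p : (0 + 1) % p = 1 := by
        rw [zero_add]; exact Nat.mod_eq_of_lt hp1
      rw [h1p, if_neg one_ne_zero, pow_one]
    · rw [if_neg (fun hc => h0 (hdvd.mp hc)), ih, if_neg h0]
      have hlt : j % p < p := Nat.mod_lt _ (by omega)
      by_cases htop : j % p = p - 1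
      · have hz : (j + 1) % p = 0 := by
          rw [hmod, htop, Nat.sub_add_cancel (le_of_lt hp1), Nat.mod_self]
        rw [hz, if_pos rfl]
        have hev : Even (p - 1) := by
          rcases hodd with ⟨t, ht⟩; exact ⟨t, by omega⟩
        rw [htop, hev.neg_one_pow]
      · have h1' : (j + 1) % p = j % p + 1 := by
          rw [hmod]; exact Nat.mod_eq_of_lt (by omega)
        rw [h1', if_neg (by omega), pow_succ]
        ring

lemma aux_h_ball (hodd : Odd p) (hcont : Continuous G)
    (hG : ∀ n : ℕ, G n = (-1) ^ n *
      ∏ j ∈ (Finset.Ico 1 n).filter (fun j => ¬ p ∣ j), (j : ℚ_[p]))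
    (x : ℤ_[p]) (c : ℕ) (hxc : ‖x - (c : ℤ_[p])‖ < 1) :
    G x * G (1 - x) = if c % p = 0 then -1 else (-1) ^ (c % p) := by
  obtain ⟨y, hy⟩ := (PadicInt.norm_lt_one_iff_dvd _).mp hxc
  have hx : x = (p : ℤ_[p]) * y + (c : ℤ_[p]) := by
    rw [← hy]; ring
  set s : Set ℤ_[p] := Set.range (fun k : ℕ => ((p * k + c : ℕ) : ℤ_[p])) with hs
  have heq : Set.EqOn (fun z : ℤ_[p] => G z * G (1 - z))
      (fun _ : ℤ_[p] => if c % p = 0 then (-1 : ℚ_[p]) else (-1) ^ (c % p)) s := by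
    rintro _ ⟨k, rfl⟩
    simp only
    rw [aux_h_nat hodd hcont hG (p * k + c), Nat.mul_add_mod]
  have hcl := heq.closure ((hcont.mul (hcont.comp (continuous_const.sub continuous_id))))
    continuous_const
  apply hcl
  have h1 : x ∈ (fun z : ℤ_[p] => (p : ℤ_[p]) * z + (c : ℤ_[p])) ''
      closure (Set.range (Nat.cast : ℕ → ℤ_[p])) := by
    refine ⟨y, ?_, hx.symm⟩
    rw [PadicInt.denseRange_natCast.closure_range]
    trivial
  refine (image_closure_subset_closure_image (by continuity)).trans (closure_mono ?_) h1
  rintro _ ⟨_, ⟨k, rfl⟩, rfl⟩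
  exact ⟨k, by push_cast; ring⟩

/-- Parity of `(p^r - 1)/2` equals parity of `r * ((p-1)/2)`. -/
lemma aux_half_parity (p : ℕ) (hodd : Odd p) (r : ℕ) :
    ((p ^ r - 1) / 2) % 2 = (r * ((p - 1) / 2)) % 2 := by
  obtain ⟨a, ha⟩ := hodd
  have key : ∀ k : ℕ, ∃ s : ℕ, p ^ k = 2 * s + 1 ∧ s % 2 = (k * a) % 2 := by
    intro k
    induction k with
    | zero => exact ⟨0, by simp⟩
    | succ k ih =>
      obtain ⟨s, hs1, hs2⟩ := ih
      refine ⟨2 * (s * a) + s + a, ?_, ?_⟩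
      · rw [pow_succ, hs1, ha]; ring
      · have h1 : (2 * (s * a) + s + a) % 2 = (s + a) % 2 := by omega
        have h2 : (k + 1) * a = k * a + a := by ring
        omega
  obtain ⟨s, hs1, hs2⟩ := key r
  have h1 : (p ^ r - 1) / 2 = s := by omega
  have h2 : (p - 1) / 2 = a := by omega
  rw [h1, h2, hs2]

/-- The core digit-sum parity lemma: for `n < p^r - 1`,
`∑_{i<r} ((n p^i mod (p^r-1)) mod p) ≡ n (mod 2)`. -/
lemma aux_sum_mod_parity (p r : ℕ) [hpf : Fact p.Prime] (hodd : Odd p) (hr : 0 < r)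
    (n : ℕ) (hn : n < p ^ r - 1) :
    (∑ i ∈ Finset.range r, (n * p ^ i % (p ^ r - 1)) % p) % 2 = n % 2 := by
  have hp1 : 1 < p := hpf.out.one_lt
  set Q : ℕ := p ^ r - 1 with hQ
  have hQpos : 0 < Q := by
    have : p ^ r ≥ p ^ 1 := Nat.pow_le_pow_right (by omega) hr
    simp only [pow_one] at this
    omega
  set ni : ℕ → ℕ := fun i => n * p ^ i % Q with hni
  set ci : ℕ → ℕ := fun i => p * ni i / Q with hci
  have hni_lt : ∀ i, ni i < Q := fun i => Nat.mod_lt _ hQpos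
  have hF1 : ∀ i, ni (i + 1) = p * ni i % Q := by
    intro i
    simp only [hni]
    rw [pow_succ]
    conv_lhs => rw [show n * (p ^ i * p) = p * (n * p ^ i) by ring]
    rw [Nat.mul_mod_mod]
  have hF2 : ∀ i, p * ni i = Q * ci i + ni (i + 1) := by
    intro i
    rw [hF1 i]
    simp only [hci]
    exact (Nat.div_add_mod (p * ni i) Q).symm
  have hci_lt : ∀ i, ci i < p := by
    intro i
    simp only [hci]
    rw [Nat.div_lt_iff_lt_mul hQpos]
    have := hni_lt i
    exact (mul_lt_mul_iff_right₀ (show 0 < p by omega)).mpr (hni_lt i)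
  -- telescoping: n * p^k = Q * S k + ni k
  have htel : ∀ k, n * p ^ k = Q * (∑ i ∈ Finset.range k, ci (k - 1 - i) * p ^ i) + ni k := by
    intro k
    induction k with
    | zero =>
      simp [hni, Nat.mod_eq_of_lt (show n < Q by omega)]
    | succ k ih =>
      have hS : ∑ i ∈ Finset.range (k + 1), ci (k + 1 - 1 - i) * p ^ i =
          p * (∑ i ∈ Finset.range k, ci (k - 1 - i) * p ^ i) + ci k := by
        simp only [Nat.add_sub_cancel]
        rw [Finset.sum_range_succ']
        simp only [pow_zero, mul_one, Nat.sub_zero]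
        rw [Finset.mul_sum]
        congr 1
        refine Finset.sum_congr rfl fun i _ => ?_
        rw [show k - (i + 1) = k - 1 - i by omega, pow_succ]
        ring
      rw [hS]
      calc n * p ^ (k + 1) = n * p ^ k * p := by rw [pow_succ]; ring
        _ = (Q * (∑ i ∈ Finset.range k, ci (k - 1 - i) * p ^ i) + ni k) * p := by rw [ih]
        _ = Q * (p * (∑ i ∈ Finset.range k, ci (k - 1 - i) * p ^ i)) + p * ni k := by ring
        _ = Q * (p * (∑ i ∈ Finset.range k, ci (k - 1 - i) * p ^ i)) +
            (Q * ci k + ni (k + 1)) := by rw [hF2 k]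
        _ = Q * (p * (∑ i ∈ Finset.range k, ci (k - 1 - i) * p ^ i) + ci k) + ni (k + 1) := by
            ring
  -- cyclicity: ni r = n
  have hnir : ni r = n := by
    simp only [hni]
    have h1 : n * p ^ r = Q * n + n := by
      have h2 : p ^ r = Q + 1 := by omega
      rw [h2]; ring
    rw [h1, Nat.mul_add_mod, Nat.mod_eq_of_lt (by omega)]
  -- digit expansion: n = ∑ ci (r-1-i) p^i
  have hdig : n = ∑ i ∈ Finset.range r, ci (r - 1 - i) * p ^ i := by
    have h1 := htel r
    rw [hnir] at h1
    have h2 : p ^ r = Q + 1 := by omega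
    rw [h2] at h1
    have h2' : n * (Q + 1) = n * Q + n := by ring
    rw [h2'] at h1
    have h4 : n * Q = Q * (∑ i ∈ Finset.range r, ci (r - 1 - i) * p ^ i) :=
      Nat.add_right_cancel h1
    rw [Nat.mul_comm n Q] at h4
    exact Nat.eq_of_mul_eq_mul_left hQpos h4
  -- parity of n equals parity of digit sum
  have hpar1 : n % 2 = (∑ i ∈ Finset.range r, ci i) % 2 := by
    conv_lhs => rw [hdig]
    rw [← Finset.sum_range_reflect (fun i => ci i) r]
    rw [Finset.sum_nat_mod, Finset.sum_nat_mod (s := Finset.range r) (f := fun i => ci (r - 1 - i))]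
    congr 1
    refine Finset.sum_congr rfl fun i _ => ?_
    rw [Nat.mul_mod]
    have hpow : p ^ i % 2 = 1 := Nat.odd_iff.mp (hodd.pow)
    rw [hpow, Nat.mul_one, Nat.mod_mod_of_dvd _ dvd_rfl]
  -- residues: ni (i+1) % p = ci i
  have hF6 : ∀ i, ni (i + 1) % p = ci i := by
    intro i
    have h1 := hF2 i
    have h2 : ((p * ni i : ℕ) : ZMod p) = ((Q * ci i + ni (i + 1) : ℕ) : ZMod p) := by
      exact_mod_cast congrArg _ h1
    push_cast at h2
    rw [ZMod.natCast_self, zero_mul] at h2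
    have hQp : ((Q : ℕ) : ZMod p) = -1 := by
      have h3 : ((Q : ℕ) : ZMod p) + 1 = ((p ^ r : ℕ) : ZMod p) := by
        have : (Q : ℕ) + 1 = p ^ r := by omega
        exact_mod_cast congrArg (Nat.cast : ℕ → ZMod p) this
      push_cast at h3
      rw [ZMod.natCast_self, zero_pow (by omega)] at h3
      linear_combination h3
    rw [hQp] at h2
    have h4 : ((ni (i + 1) : ℕ) : ZMod p) = ((ci i : ℕ) : ZMod p) := by
      linear_combination -h2
    have h5 := (ZMod.natCast_eq_natCast_iff _ _ _).mp h4
    unfold Nat.ModEq at h5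
    rw [Nat.mod_eq_of_lt (hci_lt i)] at h5
    exact h5
  -- sum of residues equals sum of digits
  have hF7 : ∑ i ∈ Finset.range r, ni i % p = ∑ i ∈ Finset.range r, ci i := by
    obtain ⟨t, rfl⟩ : ∃ t, r = t + 1 := ⟨r - 1, by omega⟩
    rw [Finset.sum_range_succ', Finset.sum_range_succ]
    congr 1
    · exact Finset.sum_congr rfl fun i _ => hF6 i
    · have h0 : ni 0 = n := by
        simp [hni, Nat.mod_eq_of_lt (show n < Q by omega)]
      rw [h0, ← hnir, hF6 t]
  calc (∑ i ∈ Finset.range r, (n * p ^ i % Q) % p) % 2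
      = (∑ i ∈ Finset.range r, ni i % p) % 2 := rfl
    _ = (∑ i ∈ Finset.range r, ci i) % 2 := by rw [hF7]
    _ = n % 2 := hpar1.symm



/-- For `0 ≤ m ≤ q-2` with `m ≠ (q-1)/2`,
`∏_{i=0}^{r-1} Γ_p(⟨(1/2 - m/(q-1))p^i⟩) Γ_p(⟨(1/2 + m/(q-1))p^i⟩) / Γ_p(⟨p^i/2⟩)^2
= ω̄^m(-1)`.  Here `G : ℤ_p → ℚ_p` is Morita's `p`-adic gamma function, the fractional
parts are written as `(k mod (q-1))/(q-1)` inside `ℤ_p` (note `1/2 = ((q-1)/2)/(q-1)`),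
and `w = ω̄(-1)` is the `(q-1)`-th root of unity congruent to `-1` mod `p`. -/
theorem stmt12 (p r q : ℕ) [hpf : Fact p.Prime] (hodd : Odd p) (hr : 0 < r)
    (hq : q = p ^ r)
    (G : ℤ_[p] → ℚ_[p]) (hcont : Continuous G)
    (hG : ∀ n : ℕ, G n = (-1) ^ n *
      ∏ j ∈ (Finset.Ico 1 n).filter (fun j => ¬ p ∣ j), (j : ℚ_[p]))
    (m : ℕ) (hm2 : m ≤ q - 2) (hm3 : m ≠ (q - 1) / 2)
    (w : ℚ_[p]) (hw1 : w ^ (q - 1) = 1) (hw2 : ‖w + 1‖ < 1) :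
    ∏ i ∈ Finset.range r,
        (G (((((q - 1) / 2 + (q - 1) - m) * p ^ i) % (q - 1) : ℕ) *
              Ring.inverse ((q - 1 : ℕ) : ℤ_[p])) *
            G (((((q - 1) / 2 + m) * p ^ i) % (q - 1) : ℕ) *
              Ring.inverse ((q - 1 : ℕ) : ℤ_[p]))) /
          (G ((((q - 1) / 2 * p ^ i) % (q - 1) : ℕ) *
              Ring.inverse ((q - 1 : ℕ) : ℤ_[p])) *
            G ((((q - 1) / 2 * p ^ i) % (q - 1) : ℕ) *
              Ring.inverse ((q - 1 : ℕ) : ℤ_[p]))) =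
      w ^ m := by
  have hp1 : 1 < p := hpf.out.one_lt
  have hp3 : 3 ≤ p := by
    rcases hodd with ⟨t, ht⟩
    have := hpf.out.two_le
    omega
  set q1 : ℕ := q - 1 with hq1def
  have hq3 : 3 ≤ q := by
    rw [hq]
    calc 3 ≤ p := hp3
      _ = p ^ 1 := (pow_one p).symm
      _ ≤ p ^ r := Nat.pow_le_pow_right (by omega) hr
  have hq1r : q1 = p ^ r - 1 := by omega
  have hq1pos : 0 < q1 := by omega
  have hqodd : Odd q := by rw [hq]; exact hodd.pow
  have hq1even : Even q1 := by
    rcases hqodd with ⟨t, ht⟩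
    exact ⟨t, by omega⟩
  have hpq : p ∣ q := by rw [hq]; exact dvd_pow_self p (by omega)
  have hpq1 : ¬ p ∣ q1 := by
    intro hdvd
    have h1 : p ∣ q - q1 := Nat.dvd_sub hpq hdvd
    rw [show q - q1 = 1 by omega] at h1
    have := Nat.le_of_dvd one_pos h1
    omega
  -- w = -1
  have hw : w = -1 := aux_w_eq_neg_one p q1 hpq1 hq1even hq1pos w hw1 hw2
  -- the inverse of q1 in ℤ_p
  have hQnorm : ‖((q1 : ℕ) : ℤ_[p])‖ = 1 := by
    have hcast : ((q1 : ℕ) : ℤ_[p]) = ((q1 : ℤ) : ℤ_[p]) := by push_cast; ring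
    rw [hcast]
    have hle : ‖((q1 : ℤ) : ℤ_[p])‖ ≤ 1 := PadicInt.norm_le_one _
    rcases lt_or_eq_of_le hle with h | h
    · exfalso
      have := (PadicInt.norm_int_lt_one_iff_dvd (q1 : ℤ)).mp h
      exact hpq1 (Int.natCast_dvd_natCast.mp this)
    · exact h
  have hu_isUnit : IsUnit ((q1 : ℕ) : ℤ_[p]) := PadicInt.isUnit_iff.mpr hQnorm
  set u : ℤ_[p] := Ring.inverse ((q1 : ℕ) : ℤ_[p]) with hudef
  have huu : ((q1 : ℕ) : ℤ_[p]) * u = 1 := Ring.mul_inverse_cancel _ hu_isUnit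
  have hule : ‖u‖ ≤ 1 := PadicInt.norm_le_one u
  -- the key valuation of G(x)G(1-x) at points a*u
  have hq1z : ((q1 : ℕ) : ZMod p) = -1 := by
    have h3 : ((q1 : ℕ) : ZMod p) + 1 = ((q : ℕ) : ZMod p) := by
      have h4 : q1 + 1 = q := by omega
      exact_mod_cast congrArg (Nat.cast : ℕ → ZMod p) h4
    rw [hq] at h3
    push_cast at h3
    rw [ZMod.natCast_self, zero_pow (by omega)] at h3
    linear_combination h3
  have hball : ∀ a : ℕ, ‖(a : ℤ_[p]) * u - (((p - a % p) % p : ℕ) : ℤ_[p])‖ < 1 := by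
    intro a
    set c : ℕ := (p - a % p) % p with hcdef
    have hdvd : (p : ℤ) ∣ ((a : ℤ) - (q1 : ℤ) * (c : ℤ)) := by
      have hz : (((a : ℤ) - (q1 : ℤ) * (c : ℤ) : ℤ) : ZMod p) = 0 := by
        push_cast
        rw [hq1z]
        have hcz : ((c : ℕ) : ZMod p) = -((a : ℕ) : ZMod p) := by
          have h5 : ((c : ℕ) : ZMod p) = ((p - a % p : ℕ) : ZMod p) := by
            rw [hcdef]
            exact ZMod.natCast_mod _ p
          have h6 : ((p - a % p : ℕ) : ZMod p) + ((a % p : ℕ) : ZMod p) = 0 := by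
            by_cases h0 : a % p = 0
            · rw [h0, Nat.sub_zero, ZMod.natCast_self]
              simp
            · have hlt := Nat.mod_lt a (show 0 < p by omega)
              rw [← Nat.cast_add, Nat.sub_add_cancel (le_of_lt hlt), ZMod.natCast_self]
          have h7 : ((a % p : ℕ) : ZMod p) = ((a : ℕ) : ZMod p) := ZMod.natCast_mod a p
          rw [h5, ← h7]
          linear_combination h6
        rw [hcz]
        ring
      exact (ZMod.intCast_zmod_eq_zero_iff_dvd _ _).mp hz
    have key : (a : ℤ_[p]) * u - (c : ℤ_[p]) =
        (((a : ℤ) - (q1 : ℤ) * (c : ℤ) : ℤ) : ℤ_[p]) * u := by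
      push_cast
      linear_combination (c : ℤ_[p]) * huu
    rw [key, norm_mul]
    have h1 : ‖(((a : ℤ) - (q1 : ℤ) * (c : ℤ) : ℤ) : ℤ_[p])‖ < 1 :=
      (PadicInt.norm_int_lt_one_iff_dvd _).mpr hdvd
    calc ‖(((a : ℤ) - (q1 : ℤ) * (c : ℤ) : ℤ) : ℤ_[p])‖ * ‖u‖
        ≤ ‖(((a : ℤ) - (q1 : ℤ) * (c : ℤ) : ℤ) : ℤ_[p])‖ * 1 := by
          gcongr
      _ = ‖(((a : ℤ) - (q1 : ℤ) * (c : ℤ) : ℤ) : ℤ_[p])‖ := mul_one _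
      _ < 1 := h1
  have hval : ∀ a : ℕ, G ((a : ℤ_[p]) * u) * G (1 - (a : ℤ_[p]) * u) =
      (-1) ^ (p - a % p) := by
    intro a
    rw [aux_h_ball hodd hcont hG _ ((p - a % p) % p) (hball a)]
    rw [Nat.mod_mod_of_dvd _ dvd_rfl]
    by_cases h0 : a % p = 0
    · rw [h0, Nat.sub_zero, Nat.mod_self, if_pos rfl, hodd.neg_one_pow]
    · have h1 : a % p < p := Nat.mod_lt _ (by omega)
      have h2 : (p - a % p) % p = p - a % p := Nat.mod_eq_of_lt (by omega)
      rw [h2, if_neg (by omega)]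
  -- arithmetic setup
  set n : ℕ := (q1 / 2 + m) % q1 with hndef
  have hm2' : m ≤ q1 - 1 := by omega
  have hq12 : q1 / 2 + q1 / 2 = q1 := by
    rcases hq1even with ⟨t, ht⟩
    omega
  have hn_lt : n < q1 := Nat.mod_lt _ hq1pos
  have hn_pos : 0 < n := by
    rcases Nat.eq_zero_or_pos n with h | h
    swap
    · exact h
    exfalso
    obtain ⟨k, hk⟩ := Nat.dvd_of_mod_eq_zero h
    rcases k with _ | _ | k
    · omega
    · apply hm3
      omega
    · have h5 : q1 * 2 ≤ q1 * (k + 1 + 1) := Nat.mul_le_mul_left q1 (by omega)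
      omega
  have hcop : ∀ i : ℕ, Nat.Coprime q1 (p ^ i) := fun i =>
    ((hpf.out.coprime_iff_not_dvd.mpr hpq1).symm.pow_right i)
  -- per-index data
  have hni_eq : ∀ i : ℕ, ((q1 / 2 + m) * p ^ i) % q1 = n * p ^ i % q1 := by
    intro i
    conv_rhs => rw [hndef, Nat.mul_mod, Nat.mod_mod_of_dvd _ dvd_rfl, ← Nat.mul_mod]
  have hni_lt : ∀ i : ℕ, n * p ^ i % q1 < q1 := fun i => Nat.mod_lt _ hq1pos
  have hni_pos : ∀ i : ℕ, 0 < n * p ^ i % q1 := by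
    intro i
    rcases Nat.eq_zero_or_pos (n * p ^ i % q1) with h | h
    swap
    · exact h
    exfalso
    have hdvd := Nat.dvd_of_mod_eq_zero h
    have h2 : q1 ∣ n := (Nat.Coprime.dvd_of_dvd_mul_right (hcop i)) hdvd
    have := Nat.le_of_dvd hn_pos h2
    omega
  have ha_eq : ∀ i : ℕ, ((q1 / 2 + q1 - m) * p ^ i) % q1 = q1 - n * p ^ i % q1 := by
    intro i
    have hsum : (q1 / 2 + q1 - m) + (q1 / 2 + m) = 2 * q1 := by omega
    have hmod0 : (((q1 / 2 + q1 - m) * p ^ i) % q1 + ((q1 / 2 + m) * p ^ i) % q1) % q1 = 0 := by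
      rw [← Nat.add_mod]
      have h6 : (q1 / 2 + q1 - m) * p ^ i + (q1 / 2 + m) * p ^ i = q1 * (2 * p ^ i) := by
        rw [← Nat.add_mul, hsum]
        ring
      rw [h6, Nat.mul_mod_right]
    rw [hni_eq i] at hmod0
    obtain ⟨k, hk⟩ := Nat.dvd_of_mod_eq_zero hmod0
    have hlt1 : ((q1 / 2 + q1 - m) * p ^ i) % q1 < q1 := Nat.mod_lt _ hq1pos
    have := hni_lt i
    have := hni_pos i
    rcases k with _ | _ | k
    · omega
    · omega
    · have h5 : q1 * 2 ≤ q1 * (k + 1 + 1) := Nat.mul_le_mul_left q1 (by omega)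
      omega
  have hden_eq : ∀ i : ℕ, (q1 / 2 * p ^ i) % q1 = q1 / 2 := by
    intro i
    obtain ⟨t, ht⟩ := hq1even
    obtain ⟨s, hs⟩ : Odd (p ^ i) := hodd.pow
    have ht2 : q1 / 2 = t := by omega
    have h7 : q1 / 2 * p ^ i = t + q1 * s := by
      rw [ht2, hs, ht]
      ring
    rw [h7, Nat.add_mul_mod_self_left, ht2, Nat.mod_eq_of_lt (by omega)]
  -- rewrite each factor
  have hfactor : ∀ i ∈ Finset.range r,
      (G (((((q1) / 2 + (q1) - m) * p ^ i) % (q1) : ℕ) * u) *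
            G (((((q1) / 2 + m) * p ^ i) % (q1) : ℕ) * u)) /
          (G ((((q1) / 2 * p ^ i) % (q1) : ℕ) * u) *
            G ((((q1) / 2 * p ^ i) % (q1) : ℕ) * u)) =
      ((-1 : ℚ_[p]) ^ (p - (n * p ^ i % q1) % p)) / ((-1) ^ (p - (q1 / 2) % p)) := by
    intro i _
    rw [ha_eq i, hni_eq i, hden_eq i]
    have hcast1 : ((q1 - n * p ^ i % q1 : ℕ) : ℤ_[p]) * u =
        1 - ((n * p ^ i % q1 : ℕ) : ℤ_[p]) * u := by
      rw [Nat.cast_sub (le_of_lt (hni_lt i))]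
      linear_combination huu
    rw [hcast1, mul_comm (G (1 - ((n * p ^ i % q1 : ℕ) : ℤ_[p]) * u)) _, hval (n * p ^ i % q1)]
    have hb' : (1 : ℤ_[p]) - ((q1 / 2 : ℕ) : ℤ_[p]) * u = ((q1 / 2 : ℕ) : ℤ_[p]) * u := by
      have h8 : ((q1 / 2 : ℕ) : ℤ_[p]) + ((q1 / 2 : ℕ) : ℤ_[p]) = ((q1 : ℕ) : ℤ_[p]) := by
        rw [← Nat.cast_add, hq12]
      linear_combination -huu - u * h8
    nth_rewrite 2 [← hb']
    rw [hval (q1 / 2)]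
  rw [Finset.prod_congr rfl hfactor, Finset.prod_div_distrib, Finset.prod_pow_eq_pow_sum,
    Finset.prod_const, Finset.card_range, ← pow_mul, hw]
  -- final parity computation
  have hA : (∑ i ∈ Finset.range r, (p - (n * p ^ i % q1) % p)) +
      (∑ i ∈ Finset.range r, (n * p ^ i % q1) % p) = r * p := by
    rw [← Finset.sum_add_distrib]
    rw [Finset.sum_congr rfl (fun i _ => by
      have : (n * p ^ i % q1) % p < p := Nat.mod_lt _ (by omega)
      omega : ∀ i ∈ Finset.range r, (p - (n * p ^ i % q1) % p) + (n * p ^ i % q1) % p = p)]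
    rw [Finset.sum_const, Finset.card_range, smul_eq_mul]
  have hB2 : (∑ i ∈ Finset.range r, (n * p ^ i % q1) % p) % 2 = n % 2 := by
    have := aux_sum_mod_parity p r hodd hr n (by omega)
    rw [← hq1r] at this
    exact this
  have hn2 : n % 2 = (q1 / 2 + m) % 2 := by
    have hdm := Nat.div_add_mod (q1 / 2 + m) q1
    obtain ⟨t, ht⟩ := hq1even
    have hq1K : q1 * ((q1 / 2 + m) / q1) = 2 * (t * ((q1 / 2 + m) / q1)) := by
      rw [ht]; ring
    omega
  have hhalf : (q1 / 2) % 2 = (r * ((p - 1) / 2)) % 2 := by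
    have := aux_half_parity p hodd r
    rw [← hq1r] at this
    exact this
  have hd' : (q1 / 2) % p = (p - 1) / 2 := by
    obtain ⟨b, hb⟩ : Odd (p ^ (r - 1)) := hodd.pow
    obtain ⟨a, ha⟩ := hodd
    have hpr : p ^ r = p * p ^ (r - 1) := by
      rw [← pow_succ']
      congr 1
      omega
    have hq1ab : q1 = 2 * (b * p + a) := by
      rw [hq1r, hpr, hb, ha]
      ring_nf
      omega
    have h9 : q1 / 2 = b * p + a := by omega
    rw [h9, show b * p + a = a + b * p by ring, Nat.add_mul_mod_self_right,
      Nat.mod_eq_of_lt (by omega), show a = (p - 1) / 2 by omega]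
  have hBsum : r * (p - (q1 / 2) % p) + r * ((p - 1) / 2) = r * p := by
    rw [hd', ← Nat.mul_add]
    congr 1
    omega
  -- conclude
  have hpowne : ((-1 : ℚ_[p]) ^ ((p - (q1 / 2) % p) * r)) ≠ 0 :=
    pow_ne_zero _ (neg_ne_zero.mpr one_ne_zero)
  rw [div_eq_iff hpowne, ← pow_add]
  rw [neg_one_pow_eq_pow_mod_two, neg_one_pow_eq_pow_mod_two
    (n := m + (p - (q1 / 2) % p) * r)]
  congr 1
  have hcomm : (p - (q1 / 2) % p) * r = r * (p - (q1 / 2) % p) := Nat.mul_comm _ _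
  omega
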